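/- (Orthogonality of Hahn polynomials from the algebra) With Q_{k,l} = ₃F₂(−k,k+λ₁+λ₂−1,−l; λ₁,−N; 1) and tilde-Q_{k,l} = [binom(N,l)(λ₁)_l(λ₂)_{N−l}/(λ₂)_N] · [binom(N,k)(λ₁)_k(λ₁+λ₂)_N/((λ₂)_k(λ₁+λ₂+k−1)_k(λ₁+λ₂+2k)_{N−k})] · Q_{k,l}, one has ∑_{k=0}^{N} Q_{k,l} tilde-Q_{k,l'} = δ_{l,l'} (λ₁+λ₂)_N/(λ₂)_N and ∑_{l=0}^{N} Q_{k,l} tilde-Q_{k',l} = δ_{k,k'} (λ₁+λ₂)_N/(λ₂)_N, for all 0 ≤ k,k',l,l' ≤ N, assuming λ₁, λ₂ ∉ {0,...,−(N−1)} and λ₁+λ₂ ∉ {0,...,−(2N−2)}. -/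

import Mathlib

open Finset

/-- Rising Pochhammer symbol `(x)_m = x(x+1)⋯(x+m-1)` over `ℂ`. -/
noncomputable def poch (x : ℂ) (m : ℕ) : ℂ := (ascPochhammer ℂ m).eval x

/-- Hahn polynomial value `Q_{k,l} = ₃F₂(-k, k+λ₁+λ₂-1, -l; λ₁, -N; 1)`. -/
noncomputable def hahnQ (lam1 lam2 : ℂ) (N k l : ℕ) : ℂ :=
  ∑ n ∈ range (k + 1),
    poch (-(k : ℂ)) n * poch ((k : ℂ) + lam1 + lam2 - 1) n * poch (-(l : ℂ)) n /
      (poch lam1 n * poch (-(N : ℂ)) n * (n.factorial : ℂ))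

/-- Renormalised Hahn value `Q̃_{k,l}`. -/
noncomputable def hahnQt (lam1 lam2 : ℂ) (N k l : ℕ) : ℂ :=
  ((N.choose l : ℂ) * poch lam1 l * poch lam2 (N - l) / poch lam2 N) *
    ((N.choose k : ℂ) * poch lam1 k * poch (lam1 + lam2) N /
      (poch lam2 k * poch (lam1 + lam2 + (k : ℂ) - 1) k *
        poch (lam1 + lam2 + 2 * (k : ℂ)) (N - k))) *
    hahnQ lam1 lam2 N k l

lemma poch_zero (x : ℂ) : poch x 0 = 1 := by simp [poch]
lemma poch_succ (x : ℂ) (n : ℕ) : poch x (n+1) = poch x n * (x + n) := by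
  simp [poch, ascPochhammer_succ_right]
lemma poch_succ_left (x : ℂ) (n : ℕ) : poch x (n+1) = x * poch (x+1) n := by
  simp [poch, ascPochhammer_succ_left, Polynomial.eval_comp]
lemma poch_ne_zero {x : ℂ} {n : ℕ} (h : ∀ i : ℕ, i < n → x + i ≠ 0) : poch x n ≠ 0 := by
  induction n with
  | zero => simp [poch_zero]
  | succ m ih =>
    rw [poch_succ]
    exact mul_ne_zero (ih fun i hi => h i (by omega)) (h m (by omega))
noncomputable def hA (l1 l2 : ℂ) (N k n : ℕ) : ℂ :=
  poch (-(k : ℂ)) n * poch ((k : ℂ) + l1 + l2 - 1) n /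
    (poch l1 n * poch (-(N : ℂ)) n * (n.factorial : ℂ))
noncomputable def hW (l1 l2 : ℂ) (N l : ℕ) : ℂ :=
  (N.choose l : ℂ) * poch l1 l * poch l2 (N - l)

lemma basis_diff (l1 l2 : ℂ) (N n : ℕ) (x : ℂ) :
    ((x + l1) * (x - N)) * (poch (-(x+1)) (n+1) - poch (-x) (n+1))
      + (x * (x - l2 - N)) * (poch (-(x-1)) (n+1) - poch (-x) (n+1))
    = -(((n:ℂ)+1) * (l1 + n) * ((n:ℂ) - N)) * poch (-x) n
      + ((n:ℂ)+1) * ((n:ℂ) + l1 + l2) * poch (-x) (n+1) := by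
  have e1 : poch (-(x+1)) (n+1) = (-x-1) * poch (-x) n := by
    rw [poch_succ_left]; ring_nf
  have e2 : poch (-x) (n+1) = poch (-x) n * (-x + n) := poch_succ _ _
  have e3 : poch (-(x-1)) (n+1) = poch (1-x) n * (1 - x + n) := by
    rw [show -(x-1) = 1 - x by ring, poch_succ]
  have hR : (-x) * poch (1-x) n = poch (-x) n * (-x + n) := by
    rw [← poch_succ]
    rw [poch_succ_left]
    ring_nf
  rw [e1, e2, e3]
  linear_combination (-(x - l2 - N) * (1 - x + (n:ℂ))) * hR

lemma pearson (l1 l2 : ℂ) (N l : ℕ) (hl : l < N) :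
    hW l1 l2 N (l+1) * (((l:ℂ)+1) * (((l:ℂ)+1) - l2 - N))
      = hW l1 l2 N l * (((l:ℂ) + l1) * ((l:ℂ) - N)) := by
  have hc : ((N.choose (l+1) : ℕ) : ℂ) * ((l:ℂ)+1) = (N.choose l : ℂ) * ((N:ℂ) - l) := by
    have h : ((N.choose (l+1) * (l+1) : ℕ) : ℂ) = ((N.choose l * (N - l) : ℕ) : ℂ) := by
      rw [Nat.choose_succ_right_eq N l]
    push_cast [Nat.cast_sub hl.le] at h
    exact h
  unfold hW
  have eN : N - l = (N - (l+1)) + 1 := by omega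
  have c1 : ((N - (l+1) : ℕ) : ℂ) = (N:ℂ) - (l:ℂ) - 1 := by
    rw [Nat.cast_sub (by omega)]; push_cast; ring
  rw [eN, poch_succ, poch_succ, c1]
  linear_combination (poch l1 l * (l1 + (l:ℂ)) * poch l2 (N-(l+1)) * (((l:ℂ)+1) - l2 - (N:ℂ))) * hc

lemma hW_B (l1 l2 : ℂ) (N l : ℕ) (hl : l < N) :
    hW l1 l2 N l * (((l:ℂ) + l1) * ((l:ℂ) - N))
      = -(l1 * l2 * N) * hW (l1+1) (l2+1) (N-1) l := by
  have hcn : N.choose l * (N - l) = N * (N-1).choose l := by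
    have h1 := Nat.add_one_mul_choose_eq (N-1) l
    have h2 := Nat.choose_succ_right_eq N l
    have hN : N - 1 + 1 = N := by omega
    rw [hN] at h1
    exact h2.symm.trans h1.symm
  have hc : (N.choose l : ℂ) * ((N:ℂ) - l) = (N:ℂ) * ((N-1).choose l : ℂ) := by
    have h : ((N.choose l * (N - l) : ℕ) : ℂ) = ((N * (N-1).choose l : ℕ) : ℂ) := by
      rw [hcn]
    push_cast [Nat.cast_sub hl.le] at h
    exact h
  unfold hW
  have eN : N - l = (N - 1 - l) + 1 := by omega
  have eN2 : N - 1 - l = N - 1 - l := rfl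
  have ha : poch l1 l * ((l:ℂ) + l1) = l1 * poch (l1+1) l := by
    rw [show (l:ℂ) + l1 = l1 + l by ring, ← poch_succ, poch_succ_left]
  have hb : poch l2 (N - l) = l2 * poch (l2+1) (N-1-l) := by
    rw [eN, poch_succ_left]
  rw [hb]
  linear_combination (l2 * poch (l2+1) (N-1-l) * ((l:ℂ) - N) * (N.choose l : ℂ)) * ha - (l1 * poch (l1+1) l * l2 * poch (l2+1) (N-1-l)) * hc

lemma poch_l1_ne (l1 : ℂ) {N : ℕ} (h1 : ∀ j : ℕ, j < N → l1 ≠ -(j : ℂ)) {m : ℕ} (hm : m ≤ N) :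
    poch l1 m ≠ 0 := by
  refine poch_ne_zero fun i hi => ?_
  intro h0
  exact h1 i (by omega) (by linear_combination h0)

lemma poch_negN_ne {N m : ℕ} (hm : m ≤ N) : poch (-(N:ℂ)) m ≠ 0 := by
  refine poch_ne_zero fun i hi => ?_
  intro h0
  have : (i : ℂ) = (N : ℂ) := by linear_combination h0
  have : i = N := Nat.cast_injective this
  omega

lemma hA_rec (l1 l2 : ℂ) (N k : ℕ) (hk : k ≤ N)
    (h1 : ∀ j : ℕ, j < N → l1 ≠ -(j : ℂ)) {n : ℕ} (hn : n < k) :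
    hA l1 l2 N k (n+1) * ((n:ℂ)+1) * (l1 + n) * ((n:ℂ) - N)
      = hA l1 l2 N k n * ((n:ℂ) - k) * ((n:ℂ) + k + l1 + l2 - 1) := by
  unfold hA
  have d1 : poch l1 n ≠ 0 := poch_l1_ne l1 h1 (by omega)
  have d2 : poch (-(N:ℂ)) n ≠ 0 := poch_negN_ne (by omega)
  have d3 : ((n.factorial : ℕ) : ℂ) ≠ 0 := Nat.cast_ne_zero.mpr n.factorial_ne_zero
  have d4 : l1 + (n:ℂ) ≠ 0 := by
    intro h0; exact h1 n (by omega) (by linear_combination h0)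
  have d5 : -(N:ℂ) + n ≠ 0 := by
    intro h0
    have : (n : ℂ) = (N : ℂ) := by linear_combination h0
    have : n = N := Nat.cast_injective this
    omega
  have d6 : ((n:ℂ)+1) ≠ 0 := by
    have : ((n+1 : ℕ) : ℂ) ≠ 0 := Nat.cast_ne_zero.mpr (by omega)
    push_cast at this; exact this
  rw [poch_succ, poch_succ, poch_succ, poch_succ, Nat.factorial_succ]
  push_cast
  field_simp
  ring

noncomputable def hQ (l1 l2 : ℂ) (N k : ℕ) (x : ℂ) : ℂ :=
  ∑ n ∈ range (k + 1), hA l1 l2 N k n * poch (-x) n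

lemma hQ_zero (l1 l2 : ℂ) (N : ℕ) (x : ℂ) : hQ l1 l2 N 0 x = 1 := by
  simp [hQ, hA, poch_zero]

lemma vandermonde (a b : ℂ) (M : ℕ) :
    ∑ l ∈ range (M+1), (M.choose l : ℂ) * poch a l * poch b (M - l) = poch (a+b) M := by
  induction M with
  | zero => simp [poch_zero]
  | succ M ih =>
    have key : ∀ l ∈ range (M+1),
        ((M+1).choose (l+1) : ℂ) * poch a (l+1) * poch b (M+1 - (l+1))
          = (M.choose l : ℂ) * poch a (l+1) * poch b (M - l)
            + (M.choose (l+1) : ℂ) * poch a (l+1) * poch b (M - (l+1) + 1) := by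
      intro l hl
      simp only [mem_range] at hl
      rw [Nat.choose_succ_succ]
      have h1 : M + 1 - (l+1) = M - l := by omega
      rcases Nat.lt_or_ge (l+1) (M+1) with h | h
      · have h2 : M - (l+1) + 1 = M - l := by omega
        rw [h1, h2]
        push_cast
        ring
      · have hl1 : l = M := by omega
        subst hl1
        rw [h1]
        simp [Nat.choose_succ_self]
    rw [Finset.sum_range_succ' _ (M+1)]
    rw [Finset.sum_congr rfl key]
    rw [Finset.sum_add_distrib]
    have e2 : ∑ l ∈ range (M+1), (M.choose (l+1) : ℂ) * poch a (l+1) * poch b (M - (l+1) + 1)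
        + ((M+1).choose 0 : ℂ) * poch a 0 * poch b (M+1-0)
        = ∑ l ∈ range (M+1), (M.choose l : ℂ) * poch a l * poch b (M - l) * (b + (M - l : ℕ)) := by
      have : ∀ l ∈ range (M+1), (M.choose l : ℂ) * poch a l * poch b (M - l) * (b + (M - l : ℕ))
          = (M.choose l : ℂ) * poch a l * poch b (M - l + 1) := by
        intro l _
        rw [poch_succ]; ring
      rw [Finset.sum_congr rfl this]
      rw [Finset.sum_range_succ' (fun l => (M.choose l : ℂ) * poch a l * poch b (M - l + 1)) M]
      simp only [Nat.choose_zero_right, Nat.cast_one, poch_zero, Nat.sub_zero]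
      have hlast : (M.choose (M+1) : ℂ) * poch a (M+1) * poch b (M - (M+1) + 1) = 0 := by
        simp [Nat.choose_succ_self]
      rw [Finset.sum_range_succ (fun l => (M.choose (l+1) : ℂ) * poch a (l+1) * poch b (M - (l+1) + 1)) M]
      rw [hlast]
      ring
    rw [add_assoc, e2]
    have e1 : ∀ l ∈ range (M+1), (M.choose l : ℂ) * poch a (l+1) * poch b (M - l)
        = (M.choose l : ℂ) * poch a l * poch b (M - l) * (a + l) := by
      intro l _; rw [poch_succ]; ring
    rw [Finset.sum_congr rfl e1, ← Finset.sum_add_distrib]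
    have e3 : ∀ l ∈ range (M+1),
        (M.choose l : ℂ) * poch a l * poch b (M - l) * (a + l)
          + (M.choose l : ℂ) * poch a l * poch b (M - l) * (b + (M - l : ℕ))
        = (M.choose l : ℂ) * poch a l * poch b (M - l) * (a + b + M) := by
      intro l hl
      simp only [mem_range] at hl
      have : ((M - l : ℕ) : ℂ) = (M : ℂ) - l := by
        rw [Nat.cast_sub (by omega : l ≤ M)]
      rw [this]; ring
    rw [Finset.sum_congr rfl e3, ← Finset.sum_mul, ih, poch_succ]


lemma hQ_diffeq (l1 l2 : ℂ) (N k : ℕ) (hk : k ≤ N)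
    (h1 : ∀ j : ℕ, j < N → l1 ≠ -(j : ℂ)) (x : ℂ) :
    ((x + l1) * (x - N)) * (hQ l1 l2 N k (x+1) - hQ l1 l2 N k x)
      + (x * (x - l2 - N)) * (hQ l1 l2 N k (x-1) - hQ l1 l2 N k x)
    = (k:ℂ) * ((k:ℂ) + l1 + l2 - 1) * hQ l1 l2 N k x := by
  have hsum1 : ((x + l1) * (x - N)) * (hQ l1 l2 N k (x+1) - hQ l1 l2 N k x)
      + (x * (x - l2 - N)) * (hQ l1 l2 N k (x-1) - hQ l1 l2 N k x)
    = ∑ n ∈ range (k+1), hA l1 l2 N k n *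
        ( ((x + l1) * (x - N)) * (poch (-(x+1)) n - poch (-x) n)
          + (x * (x - l2 - N)) * (poch (-(x-1)) n - poch (-x) n) ) := by
    unfold hQ
    rw [← Finset.sum_sub_distrib, ← Finset.sum_sub_distrib, Finset.mul_sum, Finset.mul_sum,
      ← Finset.sum_add_distrib]
    exact Finset.sum_congr rfl fun n _ => by ring
  rw [hsum1, Finset.sum_range_succ']
  have hT0 : hA l1 l2 N k 0 * (((x + l1) * (x - N)) * (poch (-(x+1)) 0 - poch (-x) 0)
      + (x * (x - l2 - N)) * (poch (-(x-1)) 0 - poch (-x) 0)) = 0 := by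
    simp [poch_zero]
  rw [hT0, add_zero]
  have hstep : ∀ n ∈ range k, hA l1 l2 N k (n+1) *
      (((x + l1) * (x - N)) * (poch (-(x+1)) (n+1) - poch (-x) (n+1))
        + (x * (x - l2 - N)) * (poch (-(x-1)) (n+1) - poch (-x) (n+1)))
      = (- (hA l1 l2 N k n * ((n:ℂ) - k) * ((n:ℂ) + k + l1 + l2 - 1)) * poch (-x) n)
        + hA l1 l2 N k (n+1) * (((n+1:ℕ)):ℂ) * ((((n+1:ℕ)):ℂ) + l1 + l2 - 1) * poch (-x) (n+1) := by
    intro n hn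
    rw [basis_diff l1 l2 N n x]
    have hr := hA_rec l1 l2 N k hk h1 (mem_range.mp hn)
    push_cast
    linear_combination (- poch (-x) n) * hr
  rw [Finset.sum_congr rfl hstep, Finset.sum_add_distrib]
  have e1 : ∑ n ∈ range k, (- (hA l1 l2 N k n * ((n:ℂ) - k) * ((n:ℂ) + k + l1 + l2 - 1)) * poch (-x) n)
      = ∑ n ∈ range (k+1), (- (hA l1 l2 N k n * ((n:ℂ) - k) * ((n:ℂ) + k + l1 + l2 - 1)) * poch (-x) n) := by
    rw [Finset.sum_range_succ]
    simp
  have e2 : ∑ n ∈ range k, hA l1 l2 N k (n+1) * (((n+1:ℕ)):ℂ) * ((((n+1:ℕ)):ℂ) + l1 + l2 - 1) * poch (-x) (n+1)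
      = ∑ n ∈ range (k+1), hA l1 l2 N k n * ((n:ℕ):ℂ) * (((n:ℕ):ℂ) + l1 + l2 - 1) * poch (-x) n := by
    rw [Finset.sum_range_succ' (fun n => hA l1 l2 N k n * ((n:ℕ):ℂ) * (((n:ℕ):ℂ) + l1 + l2 - 1) * poch (-x) n) k]
    simp
  rw [e1, e2, ← Finset.sum_add_distrib]
  unfold hQ
  rw [Finset.mul_sum]
  refine Finset.sum_congr rfl fun n _ => by push_cast; ring

lemma basis_delta (x : ℂ) (n : ℕ) :
    poch (-(x+1)) (n+1) - poch (-x) (n+1) = -((n:ℂ)+1) * poch (-x) n := by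
  have e1 : poch (-(x+1)) (n+1) = (-x-1) * poch (-x) n := by
    rw [poch_succ_left]; ring_nf
  rw [e1, poch_succ]; ring

lemma hA_shift (l1 l2 : ℂ) (N k : ℕ) (hk : k + 1 ≤ N)
    (h1 : ∀ j : ℕ, j < N → l1 ≠ -(j : ℂ)) {n : ℕ} (hn : n ≤ k) :
    l1 * N * (hA l1 l2 N (k+1) (n+1) * (((n:ℕ):ℂ)+1))
      = ((k:ℂ)+1) * ((k:ℂ) + l1 + l2) * hA (l1+1) (l2+1) (N-1) k n := by
  have d3 : ((n.factorial : ℕ) : ℂ) ≠ 0 := Nat.cast_ne_zero.mpr n.factorial_ne_zero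
  have d3' : (((n+1).factorial : ℕ) : ℂ) ≠ 0 := Nat.cast_ne_zero.mpr (n+1).factorial_ne_zero
  have d7 : poch (l1+1) n ≠ 0 := by
    refine poch_ne_zero fun i hi => ?_
    intro h0
    exact h1 (i+1) (by omega) (by push_cast; linear_combination h0)
  have d8 : poch (-((N-1:ℕ):ℂ)) n ≠ 0 := by
    refine poch_ne_zero fun i hi => ?_
    intro h0
    have hi2 : (i:ℂ) = ((N-1:ℕ):ℂ) := by linear_combination h0
    have : i = N - 1 := Nat.cast_injective hi2
    omega
  have hd1 : poch l1 (n+1) * poch (-(N:ℂ)) (n+1) * (((n+1).factorial : ℕ) : ℂ) ≠ 0 :=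
    mul_ne_zero (mul_ne_zero (poch_l1_ne l1 h1 (by omega)) (poch_negN_ne (by omega))) d3'
  have hd2 : poch (l1+1) n * poch (-((N-1:ℕ):ℂ)) n * ((n.factorial : ℕ) : ℂ) ≠ 0 :=
    mul_ne_zero (mul_ne_zero d7 d8) d3
  have ck : -(((k+1:ℕ)):ℂ) = -(k:ℂ) - 1 := by push_cast; ring
  have cN : ((N-1:ℕ):ℂ) = (N:ℂ) - 1 := by
    rw [Nat.cast_sub (by omega)]; norm_num
  have e1 : poch (-((k+1:ℕ)):ℂ) (n+1) = (-(k:ℂ)-1) * poch (-(k:ℂ)) n := by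
    rw [ck, poch_succ_left]; ring_nf
  have e2 : poch (((k+1:ℕ):ℂ) + l1 + l2 - 1) (n+1)
      = ((k:ℂ)+l1+l2) * poch ((k:ℂ) + (l1+1) + (l2+1) - 1) n := by
    rw [poch_succ_left]
    push_cast
    ring_nf
  have e3 : poch l1 (n+1) = l1 * poch (l1+1) n := poch_succ_left _ _
  have e4 : poch (-(N:ℂ)) (n+1) = -(N:ℂ) * poch (-((N-1:ℕ):ℂ)) n := by
    rw [poch_succ_left, cN]; ring_nf
  unfold hA
  rw [div_mul_eq_mul_div, ← mul_div_assoc, ← mul_div_assoc, div_eq_div_iff hd1 hd2]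
  rw [e1, e2, e3, e4, Nat.factorial_succ]
  push_cast
  ring

lemma hQ_fshift (l1 l2 : ℂ) (N k : ℕ) (hk : k + 1 ≤ N)
    (h1 : ∀ j : ℕ, j < N → l1 ≠ -(j : ℂ)) (x : ℂ) :
    l1 * N * (hQ l1 l2 N (k+1) (x+1) - hQ l1 l2 N (k+1) x)
      = -(((k:ℂ)+1) * ((k:ℂ) + l1 + l2)) * hQ (l1+1) (l2+1) (N-1) k x := by
  have hsum : hQ l1 l2 N (k+1) (x+1) - hQ l1 l2 N (k+1) x
      = ∑ n ∈ range (k+2), hA l1 l2 N (k+1) n * (poch (-(x+1)) n - poch (-x) n) := by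
    unfold hQ
    rw [← Finset.sum_sub_distrib]
    exact Finset.sum_congr rfl fun n _ => by ring
  rw [hsum, Finset.mul_sum, Finset.sum_range_succ']
  have h0 : l1 * ↑N * (hA l1 l2 N (k+1) 0 * (poch (-(x+1)) 0 - poch (-x) 0)) = 0 := by
    simp [poch_zero]
  rw [h0, add_zero]
  have hstep : ∀ n ∈ range (k+1),
      l1 * ↑N * (hA l1 l2 N (k+1) (n+1) * (poch (-(x+1)) (n+1) - poch (-x) (n+1)))
      = -(((k:ℂ)+1) * ((k:ℂ) + l1 + l2)) * (hA (l1+1) (l2+1) (N-1) k n * poch (-x) n) := by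
    intro n hn
    rw [basis_delta x n]
    have hnk : n ≤ k := Nat.lt_succ_iff.mp (mem_range.mp hn)
    have hs := hA_shift l1 l2 N k hk h1 hnk
    linear_combination (- poch (-x) n) * hs
  rw [Finset.sum_congr rfl hstep, ← Finset.mul_sum]
  rfl

noncomputable def hS (l1 l2 : ℂ) (N k k' : ℕ) : ℂ :=
  ∑ l ∈ range (N + 1), hW l1 l2 N l * hQ l1 l2 N k l * hQ l1 l2 N k' l

lemma selfadj (l1 l2 : ℂ) (N k k' : ℕ) (hk : k ≤ N)
    (h1 : ∀ j : ℕ, j < N → l1 ≠ -(j : ℂ)) :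
    (k:ℂ) * ((k:ℂ) + l1 + l2 - 1) * hS l1 l2 N k k'
      = ∑ l ∈ range N, (hW l1 l2 N l * (((l:ℂ) + l1) * ((l:ℂ) - N))) *
          (hQ l1 l2 N k (l+1:ℕ) * hQ l1 l2 N k' l + hQ l1 l2 N k l * hQ l1 l2 N k' (l+1:ℕ)
            - hQ l1 l2 N k l * hQ l1 l2 N k' l
            - hQ l1 l2 N k (l+1:ℕ) * hQ l1 l2 N k' (l+1:ℕ)) := by
  have key : ∀ l : ℕ,
      (k:ℂ) * ((k:ℂ)+l1+l2-1) * (hW l1 l2 N l * hQ l1 l2 N k l * hQ l1 l2 N k' l)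
      = (hW l1 l2 N l * (((l:ℂ)+l1)*((l:ℂ)-N))) * hQ l1 l2 N k (l+1:ℕ) * hQ l1 l2 N k' l
        - (hW l1 l2 N l * (((l:ℂ)+l1)*((l:ℂ)-N))) * hQ l1 l2 N k l * hQ l1 l2 N k' l
        + ((hW l1 l2 N l * ((l:ℂ)*((l:ℂ)-l2-N))) * hQ l1 l2 N k ((l:ℂ)-1) * hQ l1 l2 N k' l
        - (hW l1 l2 N l * ((l:ℂ)*((l:ℂ)-l2-N))) * hQ l1 l2 N k l * hQ l1 l2 N k' l) := by
    intro l
    have hd := hQ_diffeq l1 l2 N k hk h1 (l:ℂ)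
    have c1 : ((l:ℂ)+1) = ((l+1:ℕ):ℂ) := by push_cast; ring
    rw [c1] at hd
    linear_combination (-(hW l1 l2 N l * hQ l1 l2 N k' (l:ℂ))) * hd
  have hPzero : hW l1 l2 N N * (((N:ℂ)+l1)*((N:ℂ)-(N:ℂ))) = 0 := by ring
  have hT1 : ∑ l ∈ range (N+1), (hW l1 l2 N l * (((l:ℂ)+l1)*((l:ℂ)-N))) * hQ l1 l2 N k (l+1:ℕ) * hQ l1 l2 N k' l
      = ∑ l ∈ range N, (hW l1 l2 N l * (((l:ℂ)+l1)*((l:ℂ)-N))) * hQ l1 l2 N k (l+1:ℕ) * hQ l1 l2 N k' l := by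
    rw [Finset.sum_range_succ, hPzero]
    ring
  have hT2 : ∑ l ∈ range (N+1), (hW l1 l2 N l * (((l:ℂ)+l1)*((l:ℂ)-N))) * hQ l1 l2 N k l * hQ l1 l2 N k' l
      = ∑ l ∈ range N, (hW l1 l2 N l * (((l:ℂ)+l1)*((l:ℂ)-N))) * hQ l1 l2 N k l * hQ l1 l2 N k' l := by
    rw [Finset.sum_range_succ, hPzero]
    ring
  have hT3 : ∑ l ∈ range (N+1), (hW l1 l2 N l * ((l:ℂ)*((l:ℂ)-l2-N))) * hQ l1 l2 N k ((l:ℂ)-1) * hQ l1 l2 N k' l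
      = ∑ l ∈ range N, (hW l1 l2 N l * (((l:ℂ)+l1)*((l:ℂ)-N))) * hQ l1 l2 N k l * hQ l1 l2 N k' (l+1:ℕ) := by
    rw [Finset.sum_range_succ' (fun l => (hW l1 l2 N l * ((l:ℂ)*((l:ℂ)-l2-N))) * hQ l1 l2 N k ((l:ℂ)-1) * hQ l1 l2 N k' l) N]
    have h00 : (hW l1 l2 N 0 * (((0:ℕ):ℂ)*(((0:ℕ):ℂ)-l2-(N:ℂ)))) * hQ l1 l2 N k (((0:ℕ):ℂ)-1) * hQ l1 l2 N k' ((0:ℕ):ℂ) = 0 := by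
      norm_num
    rw [h00, add_zero]
    refine Finset.sum_congr rfl fun l hl => ?_
    have hlN : l < N := mem_range.mp hl
    have hp := pearson l1 l2 N l hlN
    have c2 : (((l+1:ℕ)):ℂ) = (l:ℂ)+1 := by push_cast; ring
    rw [c2, show ((l:ℂ)+1)-1 = (l:ℂ) by ring]
    linear_combination (hQ l1 l2 N k (l:ℂ) * hQ l1 l2 N k' ((l:ℂ)+1)) * hp
  have hT4 : ∑ l ∈ range (N+1), (hW l1 l2 N l * ((l:ℂ)*((l:ℂ)-l2-N))) * hQ l1 l2 N k l * hQ l1 l2 N k' l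
      = ∑ l ∈ range N, (hW l1 l2 N l * (((l:ℂ)+l1)*((l:ℂ)-N))) * hQ l1 l2 N k (l+1:ℕ) * hQ l1 l2 N k' (l+1:ℕ) := by
    rw [Finset.sum_range_succ' (fun l => (hW l1 l2 N l * ((l:ℂ)*((l:ℂ)-l2-N))) * hQ l1 l2 N k l * hQ l1 l2 N k' l) N]
    have h00 : (hW l1 l2 N 0 * (((0:ℕ):ℂ)*(((0:ℕ):ℂ)-l2-(N:ℂ)))) * hQ l1 l2 N k ((0:ℕ):ℂ) * hQ l1 l2 N k' ((0:ℕ):ℂ) = 0 := by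
      norm_num
    rw [h00, add_zero]
    refine Finset.sum_congr rfl fun l hl => ?_
    have hlN : l < N := mem_range.mp hl
    have hp := pearson l1 l2 N l hlN
    have c2 : (((l+1:ℕ)):ℂ) = (l:ℂ)+1 := by push_cast; ring
    rw [c2]
    linear_combination (hQ l1 l2 N k ((l:ℂ)+1) * hQ l1 l2 N k' ((l:ℂ)+1)) * hp
  have expand : (k:ℂ) * ((k:ℂ) + l1 + l2 - 1) * hS l1 l2 N k k'
      = ∑ l ∈ range (N+1), ((hW l1 l2 N l * (((l:ℂ)+l1)*((l:ℂ)-N))) * hQ l1 l2 N k (l+1:ℕ) * hQ l1 l2 N k' l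
        - (hW l1 l2 N l * (((l:ℂ)+l1)*((l:ℂ)-N))) * hQ l1 l2 N k l * hQ l1 l2 N k' l
        + ((hW l1 l2 N l * ((l:ℂ)*((l:ℂ)-l2-N))) * hQ l1 l2 N k ((l:ℂ)-1) * hQ l1 l2 N k' l
        - (hW l1 l2 N l * ((l:ℂ)*((l:ℂ)-l2-N))) * hQ l1 l2 N k l * hQ l1 l2 N k' l)) := by
    unfold hS
    rw [Finset.mul_sum]
    exact Finset.sum_congr rfl fun l _ => key l
  rw [expand, Finset.sum_add_distrib, Finset.sum_sub_distrib, Finset.sum_sub_distrib,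
    hT1, hT2, hT3, hT4, ← Finset.sum_sub_distrib, ← Finset.sum_sub_distrib, ← Finset.sum_add_distrib]
  exact Finset.sum_congr rfl fun l _ => by ring

lemma hS_sym (l1 l2 : ℂ) (N k k' : ℕ) : hS l1 l2 N k' k = hS l1 l2 N k k' := by
  unfold hS
  exact Finset.sum_congr rfl fun l _ => by ring

lemma hS_offdiag (l1 l2 : ℂ) (N k k' : ℕ) (hk : k ≤ N) (hk' : k' ≤ N) (hne : k ≠ k')
    (h1 : ∀ j : ℕ, j < N → l1 ≠ -(j : ℂ))
    (h12 : ∀ j : ℕ, j ≤ 2 * N - 2 → l1 + l2 ≠ -(j : ℂ)) :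
    hS l1 l2 N k k' = 0 := by
  have e1 := selfadj l1 l2 N k k' hk h1
  have e2 := selfadj l1 l2 N k' k hk' h1
  rw [hS_sym l1 l2 N k k'] at e2
  have hR : ∑ l ∈ range N, (hW l1 l2 N l * (((l:ℂ) + l1) * ((l:ℂ) - N))) *
          (hQ l1 l2 N k' (l+1:ℕ) * hQ l1 l2 N k l + hQ l1 l2 N k' l * hQ l1 l2 N k (l+1:ℕ)
            - hQ l1 l2 N k' l * hQ l1 l2 N k l
            - hQ l1 l2 N k' (l+1:ℕ) * hQ l1 l2 N k (l+1:ℕ))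
      = ∑ l ∈ range N, (hW l1 l2 N l * (((l:ℂ) + l1) * ((l:ℂ) - N))) *
          (hQ l1 l2 N k (l+1:ℕ) * hQ l1 l2 N k' l + hQ l1 l2 N k l * hQ l1 l2 N k' (l+1:ℕ)
            - hQ l1 l2 N k l * hQ l1 l2 N k' l
            - hQ l1 l2 N k (l+1:ℕ) * hQ l1 l2 N k' (l+1:ℕ)) :=
    Finset.sum_congr rfl fun l _ => by ring
  rw [hR] at e2
  have hz : (((k:ℂ) - k') * ((k:ℂ) + (k':ℂ) + l1 + l2 - 1)) * hS l1 l2 N k k' = 0 := by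
    linear_combination e1 - e2
  have hf1 : (k:ℂ) - k' ≠ 0 := by
    rw [sub_ne_zero]
    exact_mod_cast hne
  have hf2 : (k:ℂ) + (k':ℂ) + l1 + l2 - 1 ≠ 0 := by
    intro h0
    have hj : k + k' - 1 ≤ 2*N - 2 := by omega
    apply h12 (k + k' - 1) hj
    have hc : ((k + k' - 1 : ℕ) : ℂ) = (k:ℂ) + (k':ℂ) - 1 := by
      rw [Nat.cast_sub (by omega)]; push_cast; ring
    rw [hc]
    linear_combination h0
  rcases mul_eq_zero.mp hz with h | h
  · exact absurd h (mul_ne_zero hf1 hf2)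
  · exact h

lemma hS_diag (k : ℕ) : ∀ (l1 l2 : ℂ) (N : ℕ), k ≤ N →
    (∀ j : ℕ, j < N → l1 ≠ -(j : ℂ)) →
    (∀ j : ℕ, j < N → l2 ≠ -(j : ℂ)) →
    (∀ j : ℕ, 1 ≤ k → k - 1 ≤ j → j ≤ 2 * k - 2 → l1 + l2 ≠ -(j : ℂ)) →
    hS l1 l2 N k k * ((N.choose k : ℂ) * poch l1 k)
      = poch l2 k * poch (l1 + l2 + (k:ℂ) - 1) k * poch (l1 + l2 + 2*(k:ℂ)) (N - k) := by
  induction k with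
  | zero =>
    intro l1 l2 N hk H1 H2 H12
    have hb : hS l1 l2 N 0 0 = poch (l1+l2) N := by
      unfold hS
      have : ∀ l ∈ range (N+1), hW l1 l2 N l * hQ l1 l2 N 0 l * hQ l1 l2 N 0 l
          = (N.choose l : ℂ) * poch l1 l * poch l2 (N - l) := by
        intro l _
        rw [hQ_zero]
        unfold hW
        ring
      rw [Finset.sum_congr rfl this, vandermonde]
    rw [hb]
    simp [poch_zero]
  | succ k IH =>
    intro l1 l2 N hk1 H1 H2 H12
    have hN1 : 1 ≤ N := by omega
    have H1' : ∀ j : ℕ, j < N - 1 → l1 + 1 ≠ -(j : ℂ) := by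
      intro j hj h0
      exact H1 (j+1) (by omega) (by push_cast; linear_combination h0)
    have H2' : ∀ j : ℕ, j < N - 1 → l2 + 1 ≠ -(j : ℂ) := by
      intro j hj h0
      exact H2 (j+1) (by omega) (by push_cast; linear_combination h0)
    have H12' : ∀ j : ℕ, 1 ≤ k → k - 1 ≤ j → j ≤ 2 * k - 2 → (l1+1) + (l2+1) ≠ -(j : ℂ) := by
      intro j h1k hj1 hj2 h0
      exact H12 (j+2) (by omega) (by omega) (by omega) (by push_cast; linear_combination h0)
    have IH' := IH (l1+1) (l2+1) (N-1) (by omega) H1' H2' H12'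
    have hl1 : l1 ≠ 0 := by
      have := H1 0 (by omega)
      simpa using this
    have hNne : (N:ℂ) ≠ 0 := Nat.cast_ne_zero.mpr (by omega)
    have hk1ne : (k:ℂ) + 1 ≠ 0 := by
      have : ((k+1:ℕ):ℂ) ≠ 0 := Nat.cast_ne_zero.mpr (by omega)
      push_cast at this; exact this
    have hsk : (k:ℂ) + l1 + l2 ≠ 0 := by
      intro h0
      exact H12 k (by omega) (by omega) (by omega) (by push_cast; linear_combination h0)
    have hmu : ((k:ℂ)+1) * ((k:ℂ) + l1 + l2) ≠ 0 := mul_ne_zero hk1ne hsk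
    -- main identity
    have e1 := selfadj l1 l2 N (k+1) (k+1) hk1 H1
    have main : (l1 * (N:ℂ))^2 * (((k+1:ℕ):ℂ) * (((k+1:ℕ):ℂ) + l1 + l2 - 1)) * hS l1 l2 N (k+1) (k+1)
        = (((k:ℂ)+1) * ((k:ℂ) + l1 + l2))^2 * (l1 * l2 * N) * hS (l1+1) (l2+1) (N-1) k k := by
      have hS' : hS (l1+1) (l2+1) (N-1) k k
          = ∑ l ∈ range N, hW (l1+1) (l2+1) (N-1) l * hQ (l1+1) (l2+1) (N-1) k l * hQ (l1+1) (l2+1) (N-1) k l := by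
        unfold hS
        rw [show (N-1) + 1 = N by omega]
      rw [hS', mul_assoc, e1, Finset.mul_sum, Finset.mul_sum]
      refine Finset.sum_congr rfl fun l hl => ?_
      have hlN : l < N := mem_range.mp hl
      have hf := hQ_fshift l1 l2 N k hk1 H1 (l:ℂ)
      have c2 : (((l+1:ℕ)):ℂ) = (l:ℂ)+1 := by push_cast; ring
      rw [← c2] at hf
      have hsq : (l1 * N * (hQ l1 l2 N (k+1) ((l+1:ℕ):ℂ) - hQ l1 l2 N (k+1) (l:ℂ)))^2
          = (((k:ℂ)+1) * ((k:ℂ) + l1 + l2))^2 * (hQ (l1+1) (l2+1) (N-1) k (l:ℂ))^2 := by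
        rw [hf]; ring
      have hb := hW_B l1 l2 N l hlN
      linear_combination (-(hW l1 l2 N l * (((l:ℂ)+l1)*((l:ℂ)-(N:ℂ))))) * hsq
        - ((((k:ℂ)+1) * ((k:ℂ) + l1 + l2))^2 * (hQ (l1+1) (l2+1) (N-1) k (l:ℂ))^2) * hb
    have hcancel : l1 * (N:ℂ) * hS l1 l2 N (k+1) (k+1)
        = ((k:ℂ)+1) * ((k:ℂ) + l1 + l2) * l2 * hS (l1+1) (l2+1) (N-1) k k := by
      apply mul_left_cancel₀ (mul_ne_zero (mul_ne_zero hl1 hNne) hmu)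
      push_cast at main
      linear_combination main
    -- choose identity
    have hcn : N.choose (k+1) * (k+1) = N * (N-1).choose k := by
      have h1' := Nat.add_one_mul_choose_eq (N-1) k
      have hNN : N - 1 + 1 = N := by omega
      rw [hNN] at h1'
      exact h1'.symm
    have hchoose : (N.choose (k+1) : ℂ) * ((k:ℂ)+1) = (N:ℂ) * ((N-1).choose k : ℂ) := by
      have h : ((N.choose (k+1) * (k+1) : ℕ) : ℂ) = ((N * (N-1).choose k : ℕ) : ℂ) := by
        rw [hcn]
      push_cast at h
      exact h
    -- final algebra
    apply mul_left_cancel₀ (mul_ne_zero (mul_ne_zero hk1ne hl1) hNne)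
    have p1 : poch l2 (k+1) = l2 * poch (l2+1) k := poch_succ_left _ _
    have p2 : poch l1 (k+1) = l1 * poch (l1+1) k := poch_succ_left _ _
    have p3 : poch (l1 + l2 + ((k+1:ℕ):ℂ) - 1) (k+1)
        = ((k:ℂ) + l1 + l2) * poch ((l1+1) + (l2+1) + (k:ℂ) - 1) k := by
      rw [poch_succ_left]
      push_cast
      ring_nf
    have p4 : poch (l1 + l2 + 2*((k+1:ℕ):ℂ)) (N - (k+1))
        = poch ((l1+1) + (l2+1) + 2*(k:ℂ)) ((N-1) - k) := by
      rw [show (N - (k+1)) = (N-1) - k by omega]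
      push_cast
      ring_nf
    rw [p1, p2, p3, p4]
    push_cast
    linear_combination (l1 * poch (l1+1) k * (N.choose (k+1) : ℂ) * ((k:ℂ)+1)) * hcancel
      + (l1 * poch (l1+1) k * (((k:ℂ)+1) * ((k:ℂ) + l1 + l2)) * l2 * hS (l1+1) (l2+1) (N-1) k k) * hchoose
      + (l1 * (((k:ℂ)+1) * ((k:ℂ) + l1 + l2)) * l2 * (N:ℂ)) * IH'

lemma hahnQ_eq (l1 l2 : ℂ) (N k l : ℕ) : hahnQ l1 l2 N k l = hQ l1 l2 N k (l : ℂ) := by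
  unfold hahnQ hQ hA
  exact Finset.sum_congr rfl fun n _ => by ring

theorem hahn_orthogonality (lam1 lam2 : ℂ) (N : ℕ) (hN : 0 < N)
    (h1 : ∀ j : ℕ, j < N → lam1 ≠ -(j : ℂ))
    (h2 : ∀ j : ℕ, j < N → lam2 ≠ -(j : ℂ))
    (h12 : ∀ j : ℕ, j ≤ 2 * N - 2 → lam1 + lam2 ≠ -(j : ℂ)) :
    (∀ l l' : ℕ, l ≤ N → l' ≤ N →
      ∑ k ∈ range (N + 1), hahnQ lam1 lam2 N k l * hahnQt lam1 lam2 N k l' =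
        if l = l' then poch (lam1 + lam2) N / poch lam2 N else 0) ∧
    (∀ k k' : ℕ, k ≤ N → k' ≤ N →
      ∑ l ∈ range (N + 1), hahnQ lam1 lam2 N k l * hahnQt lam1 lam2 N k' l =
        if k = k' then poch (lam1 + lam2) N / poch lam2 N else 0) := by
  have nPl2N : poch lam2 N ≠ 0 := by
    refine poch_ne_zero fun i hi => fun h0 => h2 i (by omega) (by linear_combination h0)
  have nSN : poch (lam1 + lam2) N ≠ 0 := by
    refine poch_ne_zero fun i hi => fun h0 => h12 i (by omega) (by linear_combination h0)
  have hc_ne : poch (lam1 + lam2) N / poch lam2 N ≠ 0 := div_ne_zero nSN nPl2N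
  -- second (main) relation
  have rel2 : ∀ k k' : ℕ, k ≤ N → k' ≤ N →
      ∑ l ∈ range (N + 1), hahnQ lam1 lam2 N k l * hahnQt lam1 lam2 N k' l =
        if k = k' then poch (lam1 + lam2) N / poch lam2 N else 0 := by
    intro k k' hk hk'
    have hsum : ∑ l ∈ range (N + 1), hahnQ lam1 lam2 N k l * hahnQt lam1 lam2 N k' l
        = ((N.choose k' : ℂ) * poch lam1 k' * poch (lam1 + lam2) N /
            (poch lam2 k' * poch (lam1 + lam2 + (k' : ℂ) - 1) k' *
              poch (lam1 + lam2 + 2 * (k' : ℂ)) (N - k')) / poch lam2 N)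
          * hS lam1 lam2 N k k' := by
      unfold hS
      rw [Finset.mul_sum]
      refine Finset.sum_congr rfl fun l _ => ?_
      unfold hahnQt hW
      rw [hahnQ_eq, hahnQ_eq]
      ring
    rw [hsum]
    by_cases hkk : k = k'
    · subst hkk
      rw [if_pos rfl]
      have H12k : ∀ j : ℕ, 1 ≤ k → k - 1 ≤ j → j ≤ 2 * k - 2 → lam1 + lam2 ≠ -(j : ℂ) :=
        fun j a b c => h12 j (by omega)
      have hD := hS_diag k lam1 lam2 N hk h1 h2 H12k
      have nC : ((N.choose k : ℕ) : ℂ) ≠ 0 := Nat.cast_ne_zero.mpr (Nat.choose_pos hk).ne'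
      have nP1 : poch lam1 k ≠ 0 := poch_l1_ne lam1 h1 hk
      have nR1 : poch lam2 k ≠ 0 := poch_l1_ne lam2 h2 hk
      have nR2 : poch (lam1 + lam2 + (k:ℂ) - 1) k ≠ 0 := by
        refine poch_ne_zero fun i hi => fun h0 => ?_
        refine h12 (k - 1 + i) (by omega) ?_
        have : ((k - 1 + i : ℕ) : ℂ) = (k:ℂ) - 1 + i := by
          rw [Nat.cast_add, Nat.cast_sub (by omega)]; push_cast; ring
        rw [this]
        linear_combination h0
      have nR3 : poch (lam1 + lam2 + 2 * (k:ℂ)) (N - k) ≠ 0 := by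
        refine poch_ne_zero fun i hi => fun h0 => ?_
        refine h12 (2 * k + i) (by omega) ?_
        have : ((2 * k + i : ℕ) : ℂ) = 2 * (k:ℂ) + i := by push_cast; ring
        rw [this]
        linear_combination h0
      rw [div_div, div_mul_eq_mul_div, div_eq_div_iff (mul_ne_zero (mul_ne_zero (mul_ne_zero nR1 nR2) nR3) nPl2N) nPl2N]
      linear_combination (poch (lam1 + lam2) N * poch lam2 N) * hD
    · rw [if_neg hkk, hS_offdiag lam1 lam2 N k k' hk hk' hkk h1 h12, mul_zero]
  refine ⟨?_, rel2⟩
  -- first relation via matrix inverse commutation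
  intro l l' hl hl'
  set c : ℂ := poch (lam1 + lam2) N / poch lam2 N with hc
  let M1 : Matrix (Fin (N+1)) (Fin (N+1)) ℂ := fun k l => hahnQ lam1 lam2 N k l
  let M2 : Matrix (Fin (N+1)) (Fin (N+1)) ℂ := fun l k => hahnQt lam1 lam2 N k l / c
  have hM : M1 * M2 = 1 := by
    ext k k'
    rw [Matrix.mul_apply]
    have e : ∀ j : Fin (N+1), M1 k j * M2 j k'
        = hahnQ lam1 lam2 N k j * hahnQt lam1 lam2 N k' j / c := fun j => by
      simp only [M1, M2]
      ring
    rw [Finset.sum_congr rfl fun j _ => e j, ← Finset.sum_div]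
    rw [Fin.sum_univ_eq_sum_range (fun j => hahnQ lam1 lam2 N k j * hahnQt lam1 lam2 N k' j) (N+1)]
    rw [rel2 k k' (by omega) (by omega)]
    rw [Matrix.one_apply]
    by_cases hkk : (k : ℕ) = (k' : ℕ)
    · rw [if_pos hkk, if_pos (Fin.ext hkk), div_self hc_ne]
    · rw [if_neg hkk, if_neg (fun h => hkk (congrArg Fin.val h)), zero_div]
  have hM' : M2 * M1 = 1 := mul_eq_one_comm.mp hM
  have hent : ∑ j : Fin (N+1), M2 ⟨l', by omega⟩ j * M1 j ⟨l, by omega⟩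
      = (1 : Matrix (Fin (N+1)) (Fin (N+1)) ℂ) ⟨l', by omega⟩ ⟨l, by omega⟩ := by
    rw [← Matrix.mul_apply, hM']
  have e2 : ∀ j : Fin (N+1), M2 ⟨l', by omega⟩ j * M1 j ⟨l, by omega⟩
      = hahnQ lam1 lam2 N j l * hahnQt lam1 lam2 N j l' / c := fun j => by
    simp only [M1, M2]
    ring
  rw [Finset.sum_congr rfl fun j _ => e2 j, ← Finset.sum_div,
    Fin.sum_univ_eq_sum_range (fun j => hahnQ lam1 lam2 N j l * hahnQt lam1 lam2 N j l') (N+1),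
    Matrix.one_apply] at hent
  have := (div_eq_iff hc_ne).mp hent
  rw [this]
  by_cases hll : l = l'
  · subst hll
    rw [if_pos rfl, if_pos rfl, one_mul]
  · rw [if_neg hll, if_neg (fun h : (⟨l', by omega⟩ : Fin (N+1)) = ⟨l, by omega⟩ =>
      hll (by exact (congrArg Fin.val h).symm)), zero_mul]
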